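/- For every finite tree-like n-model T there is a node T_w of the n-universal model T(n) such that: (1) there is a monotonic map from T onto T_w, and (2) T_w is isomorphic (via an order- and color-preserving bijection whose inverse is order-preserving) to a submodel of T that has the same root as T. -/

import Mathlib

/-! ## Formulas of intuitionistic propositional logic -/

inductive Formula : Type
  | bot : Formula
  | var : ℕ → Formula
  | and : Formula → Formula → Formula
  | or  : Formula → Formula → Formula
  | imp : Formula → Formula → Formula
  deriving DecidableEq

namespace Formula

def top : Formula := imp bot bot

def iff_ (φ ψ : Formula) : Formula := and (imp φ ψ) (imp ψ φ)

/-- `φ` contains no implication at all. -/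
def noImp : Formula → Prop
  | bot => True
  | var _ => True
  | and φ ψ => noImp φ ∧ noImp ψ
  | or φ ψ => noImp φ ∧ noImp ψ
  | imp _ _ => False

/-- NNIL-formulas: no nesting of implications to the left. -/
def IsNNIL : Formula → Prop
  | bot => True
  | var _ => True
  | and φ ψ => IsNNIL φ ∧ IsNNIL ψ
  | or φ ψ => IsNNIL φ ∧ IsNNIL ψ
  | imp φ ψ => noImp φ ∧ IsNNIL ψ

/-- `φ` is an `n`-formula: all its propositional variables are among `p_0, …, p_{n-1}`. -/
def varsBelow (n : ℕ) : Formula → Prop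
  | bot => True
  | var p => p < n
  | and φ ψ => varsBelow n φ ∧ varsBelow n ψ
  | or φ ψ => varsBelow n φ ∧ varsBelow n ψ
  | imp φ ψ => varsBelow n φ ∧ varsBelow n ψ

/-- the propositional variable `p` occurs in the formula -/
def occurs (p : ℕ) : Formula → Prop
  | bot => False
  | var q => q = p
  | and φ ψ => occurs p φ ∨ occurs p ψ
  | or φ ψ => occurs p φ ∨ occurs p ψ
  | imp φ ψ => occurs p φ ∨ occurs p ψ

/-- uniform substitution -/
def subst (σ : ℕ → Formula) : Formula → Formula
  | bot => bot
  | var p => σ p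
  | and φ ψ => and (subst σ φ) (subst σ ψ)
  | or φ ψ => or (subst σ φ) (subst σ ψ)
  | imp φ ψ => imp (subst σ φ) (subst σ ψ)

end Formula

/-- finite conjunction (empty conjunction is ⊤) -/
def listAnd : List Formula → Formula
  | [] => Formula.top
  | φ :: l => Formula.and φ (listAnd l)

/-- finite disjunction (empty disjunction is ⊥) -/
def listOr : List Formula → Formula
  | [] => Formula.bot
  | φ :: l => Formula.or φ (listOr l)

/-! ## Kripke structures, models and satisfaction -/

/-- raw Kripke structure: worlds, relation, Boolean valuation -/
structure KStruct where
  W : Type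
  R : W → W → Prop
  V : W → ℕ → Bool

namespace KStruct

/-- a Kripke model: `R` is a partial order and `V` is persistent -/
def IsModel (M : KStruct) : Prop :=
  (∀ w, M.R w w) ∧
  (∀ w u v, M.R w u → M.R u v → M.R w v) ∧
  (∀ w u, M.R w u → M.R u w → w = u) ∧
  (∀ w u p, M.R w u → M.V w p = true → M.V u p = true)

/-- an `n`-model: a Kripke model whose valuation is restricted to the variables `p_0,…,p_{n-1}` -/
def IsNModel (M : KStruct) (n : ℕ) : Prop :=
  M.IsModel ∧ ∀ w p, n ≤ p → M.V w p = false

/-- intuitionistic satisfaction -/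
def sat (M : KStruct) : M.W → Formula → Prop
  | _, Formula.bot => False
  | w, Formula.var p => M.V w p = true
  | w, Formula.and φ ψ => M.sat w φ ∧ M.sat w ψ
  | w, Formula.or φ ψ => M.sat w φ ∨ M.sat w ψ
  | w, Formula.imp φ ψ => ∀ u, M.R w u → M.sat u φ → M.sat u ψ

/-- the submodel on a subset of the worlds -/
def restrict (M : KStruct) (S : Set M.W) : KStruct where
  W := S
  R := fun a b => M.R a.1 b.1
  V := fun a p => M.V a.1 p

end KStruct

/-- monotonic map between Kripke structures: preserves the order and the colors -/
def Monotonic (M N : KStruct) (f : M.W → N.W) : Prop :=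
  (∀ w u, M.R w u → N.R (f w) (f u)) ∧ (∀ w p, N.V (f w) p = M.V w p)

/-- p-morphism: a monotonic map satisfying the forth condition -/
def PMorphism (M N : KStruct) (f : M.W → N.W) : Prop :=
  Monotonic M N f ∧ ∀ w u', N.R (f w) u' → ∃ u, M.R w u ∧ f u = u'

/-- MR: the class of formulas reflected by monotonic maps between Kripke models -/
def MR (φ : Formula) : Prop :=
  ∀ (N M : KStruct), N.IsModel → M.IsModel →
    ∀ f : N.W → M.W, Monotonic N M f → ∀ w : N.W, M.sat (f w) φ → N.sat w φ

/-- `r` is a root of `M` -/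
def IsRoot (M : KStruct) (r : M.W) : Prop := ∀ w, M.R r w

/-- `M` is tree-like with root `r`: rooted, and each point has a finite,
linearly ordered set of predecessors -/
def IsTree (M : KStruct) (r : M.W) : Prop :=
  IsRoot M r ∧ (∀ w : M.W, {u | M.R u w}.Finite) ∧
  (∀ w u v : M.W, M.R u w → M.R v w → (M.R u v ∨ M.R v u))

/-- `u` is an immediate (proper) successor of `w` -/
def ImmSucc (M : KStruct) (w u : M.W) : Prop :=
  M.R w u ∧ w ≠ u ∧ ∀ v, M.R w v → M.R v u → v = w ∨ v = u

/-- `S` carries a color-preserving submodel of `M` -/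
def ColorPresSub (M : KStruct) (S : Set M.W) : Prop :=
  ∀ w ∈ S, ∀ u, M.R w u → ∃ v ∈ S, M.R w v ∧ ∀ p, M.V v p = M.V u p

/-! ## The β-formulas of finite models -/

/-- the variables among `p_0,…,p_{n-1}` true at `w` -/
def propList (M : KStruct) (n : ℕ) (w : M.W) : List Formula :=
  ((List.range n).filter (fun p => M.V w p)).map Formula.var

/-- the variables among `p_0,…,p_{n-1}` false at `w` -/
def notpropList (M : KStruct) (n : ℕ) (w : M.W) : List Formula :=
  ((List.range n).filter (fun p => !(M.V w p))).map Formula.var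

open Classical in
/-- the immediate successors of `w`, as a list -/
noncomputable def immSuccList (M : KStruct) [Fintype M.W] (w : M.W) : List M.W :=
  (Finset.univ.filter (fun u => ImmSucc M w u)).toList

/-- β(w), defined by recursion on the depth of `w` (computed with enough fuel):
`β(w) = ⋀prop(w) → (⋁notprop(w) ∨ β(w_1) ∨ … ∨ β(w_k))` where the `w_i` are the
immediate successors of `w` (for maximal `w` the last disjunct is the empty disjunction). -/
noncomputable def betaFuel (M : KStruct) [Fintype M.W] (n : ℕ) : ℕ → M.W → Formula
  | 0, _ => Formula.bot
  | (k+1), w =>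
      Formula.imp (listAnd (propList M n w))
        (listOr (notpropList M n w ++ (immSuccList M w).map (fun u => betaFuel M n k u)))

/-- β(w) for a point `w` of a finite `n`-model: `Fintype.card M.W` is an upper bound
for the depth of any point, so the recursion above never runs out of fuel. -/
noncomputable def beta (M : KStruct) [inst : Fintype M.W] (n : ℕ) (w : M.W) : Formula :=
  betaFuel M n (Fintype.card M.W) w

/-! ## Unravelings -/

/-- the unraveling `T_N` of a rooted model `(N, r)`: points are the finite sequences
`⟨r, w_1, …, w_k⟩` in which each entry is an immediate successor of the preceding one,
ordered by the initial-segment relation; such a sequence satisfies the same variables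
as its last entry. -/
def Unravel (M : KStruct) (r : M.W) : KStruct where
  W := {l : List M.W // l.head? = some r ∧ List.Chain' (ImmSucc M) l}
  R := fun σ τ => σ.1 <+: τ.1
  V := fun σ p => (σ.1.getLast?.map (fun w => M.V w p)).getD false

/-! ## Kripke frames -/

structure KFrame where
  W : Type
  R : W → W → Prop

namespace KFrame

/-- a Kripke frame: `R` is a partial order -/
def IsFrame (F : KFrame) : Prop :=
  (∀ w, F.R w w) ∧ (∀ w u v, F.R w u → F.R u v → F.R w v) ∧
  (∀ w u, F.R w u → F.R u w → w = u)

def Persistent (F : KFrame) (V : F.W → ℕ → Bool) : Prop :=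
  ∀ w u p, F.R w u → V w p = true → V u p = true

/-- the model on `F` given by a valuation -/
def model (F : KFrame) (V : F.W → ℕ → Bool) : KStruct := ⟨F.W, F.R, V⟩

/-- `F ⊨ φ` : `φ` is true at every point of every model on `F` -/
def valid (F : KFrame) (φ : Formula) : Prop :=
  ∀ V, F.Persistent V → ∀ w, (F.model V).sat w φ

/-- the substructure of `F` on a subset `S` of its domain, with the restricted order -/
def restrictF (F : KFrame) (S : Set F.W) : KFrame :=
  ⟨S, fun a b => F.R a.1 b.1⟩

end KFrame

/-- a monotonic map from a model `N` into a frame `F` which is color-consistent: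
`f(w) R f(u)` implies `col(w) ≤ col(u)` -/
def ColorConsistentMap (N : KStruct) (F : KFrame) (f : N.W → F.W) : Prop :=
  (∀ w u, N.R w u → F.R (f w) (f u)) ∧
  (∀ w u, F.R (f w) (f u) → ∀ p, N.V w p = true → N.V u p = true)


/-! ## The n-universal model 𝒯(n) for NNIL -/

/-- an `n`-color -/
abbrev Col (n : ℕ) := Fin n → Bool

/-- componentwise order on colors -/
def ColLE {n : ℕ} (c d : Col n) : Prop := ∀ i, c i = true → d i = true

def ColLT {n : ℕ} (c d : Col n) : Prop := ColLE c d ∧ c ≠ d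

/-- finite colored trees: a root color together with the list of subtrees
hanging above the root -/
inductive CTree (n : ℕ) : Type
  | node : Col n → List (CTree n) → CTree n

namespace CTree

variable {n : ℕ}

def color : CTree n → Col n
  | node c _ => c

def children : CTree n → List (CTree n)
  | node _ ts => ts

/-- the subtree of `t` at a position (a list of child indices) -/
def subt : List ℕ → CTree n → Option (CTree n)
  | [], t => some t
  | i :: l, t => (t.children[i]?).bind (subt l)

/-- the finite tree-like `n`-model determined by a colored tree: its worlds are
the positions of `t`, ordered by the initial-segment relation, and a position
satisfies `p_i` iff the color of the subtree there is `1` at `i`. -/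
def toModel (t : CTree n) : KStruct where
  W := {l : List ℕ // (subt l t).isSome = true}
  R := fun a b => a.1 <+: b.1
  V := fun a p =>
    if h : p < n then ((subt a.1 t).map (fun s => s.color ⟨p, h⟩)).getD false
    else false

/-- the root of the model of a tree -/
def root (t : CTree n) : t.toModel.W := ⟨[], rfl⟩

/-- an injective code of colors -/
def colCode (c : Col n) : ℕ := ∑ i : Fin n, (if c i then 2 ^ (i : ℕ) else 0)

/-- an injective code of lists of numbers -/
def listCode : List ℕ → ℕ
  | [] => 0
  | a :: l => Nat.pair a (listCode l) + 1

/-- an injective code of colored trees, used to order the children of every node of a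
tree in the universal model canonically -/
def code : CTree n → ℕ
  | node c ts => Nat.pair (colCode c) (listCode (ts.attach.map (fun x => code x.1)))
decreasing_by
  have := List.sizeOf_lt_of_mem x.2
  simp only [CTree.node.sizeOf_spec]
  omega

end CTree

/-- `MLE s t` (`s ≤ t`): there is a monotonic map from (the model of) `t` into `s` -/
def MLE {n : ℕ} (s t : CTree n) : Prop :=
  ∃ f : t.toModel.W → s.toModel.W, Monotonic t.toModel s.toModel f

/-- membership in the domain of the universal model `𝒯(n)`, built in layers:
layer 1 consists of the one-point trees (one for each color); a tree of a later layer
is built from a set `X` of pairwise `≤`-incomparable trees of earlier layers (encoded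
as a list sorted canonically by `code`) by adding a fresh root below whose color is
strictly smaller than every color occurring in the trees of `X`. -/
inductive UMem : {n : ℕ} → CTree n → Prop
  | single {n : ℕ} (c : Col n) : UMem (CTree.node c [])
  | step {n : ℕ} (c : Col n) (ts : List (CTree n)) :
      ts ≠ [] →
      (∀ t ∈ ts, UMem t) →
      List.Chain' (fun a b => CTree.code a < CTree.code b) ts →
      (∀ t ∈ ts, ∀ s ∈ ts, t ≠ s → ¬ MLE t s) →
      (∀ t ∈ ts, ∀ (l : List ℕ) (s : CTree n), CTree.subt l t = some s →
        ColLT c s.color) →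
      UMem (CTree.node c ts)

/-- the universal model `𝒯(n)`: its points are the trees in `UMem`, ordered by `≤`
(where `T_w ≤ T_u` iff there is a monotonic map from `T_u` into `T_w`), and the color
of a node is the color of the root of the corresponding tree. -/
def UnivModel (n : ℕ) : KStruct where
  W := {t : CTree n // UMem t}
  R := fun a b => MLE a.1 b.1
  V := fun a p => if h : p < n then a.1.color ⟨p, h⟩ else false

/-- mutual monotonic mappability (`≡`) of Kripke structures -/
def MEquiv (A B : KStruct) : Prop :=
  (∃ f : B.W → A.W, Monotonic B A f) ∧ (∃ g : A.W → B.W, Monotonic A B g)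

/-! ## Auxiliary infrastructure -/

open Classical

section Aux

variable {n : ℕ}

lemma ColLE.refl (c : Col n) : ColLE c c := fun _ h => h

lemma ColLE.trans {a b c : Col n} (h1 : ColLE a b) (h2 : ColLE b c) : ColLE a c :=
  fun i h => h2 i (h1 i h)

lemma ColLE.antisymm {a b : Col n} (h1 : ColLE a b) (h2 : ColLE b a) : a = b := by
  funext i
  cases ha : a i <;> cases hb : b i
  · rfl
  · exact (Bool.false_ne_true (ha ▸ h2 i hb)).elim
  · exact (Bool.false_ne_true (hb ▸ h1 i ha)).elim
  · rfl

lemma ColLT_of_le_of_lt {a b c : Col n} (h1 : ColLE a b) (h2 : ColLT b c) : ColLT a c := by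
  refine ⟨h1.trans h2.1, fun he => h2.2 ?_⟩
  subst he
  exact (ColLE.antisymm h2.1 h1)

lemma prefix_antisymm {l m : List ℕ} (h1 : l <+: m) (h2 : m <+: l) : l = m :=
  h1.eq_of_length (le_antisymm h1.length_le h2.length_le)

namespace CTree

lemma eta (t : CTree n) : t = node t.color t.children := by cases t; rfl

@[simp] lemma subt_nil (t : CTree n) : subt [] t = some t := rfl

lemma subt_cons (i : ℕ) (l : List ℕ) (t : CTree n) :
    subt (i :: l) t = (t.children[i]?).bind (subt l) := rfl

lemma sum_two_pow_lt (m : ℕ) : ∑ i : Fin m, 2 ^ (i : ℕ) < 2 ^ m := by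
  rw [Fin.sum_univ_eq_sum_range]
  induction m with
  | zero => simp
  | succ k ih => rw [Finset.sum_range_succ, pow_succ]; omega

lemma colCode_injective : Function.Injective (colCode (n := n)) := by
  induction n with
  | zero => intro c d _; funext i; exact absurd i.2 (Nat.not_lt_zero _)
  | succ m ih =>
    have hlt : ∀ c : Col m, colCode c < 2 ^ m := by
      intro c
      calc colCode c ≤ ∑ i : Fin m, 2 ^ (i : ℕ) := by
            apply Finset.sum_le_sum
            intro i _
            split <;> simp
        _ < 2 ^ m := sum_two_pow_lt m
    intro c d hcd
    have hsplit : ∀ c : Col (m+1),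
        colCode c = colCode (fun i : Fin m => c i.castSucc)
          + (if c (Fin.last m) then 2 ^ m else 0) := by
      intro c
      unfold colCode
      rw [Fin.sum_univ_castSucc]
      simp [Fin.coe_castSucc]
    rw [hsplit c, hsplit d] at hcd
    have hc := hlt (fun i : Fin m => c i.castSucc)
    have hd := hlt (fun i : Fin m => d i.castSucc)
    have hlast : c (Fin.last m) = d (Fin.last m) := by
      by_contra hne
      cases hcl : c (Fin.last m) <;> cases hdl : d (Fin.last m) <;>
        rw [hcl, hdl] at hcd hne <;> simp at hcd hne <;> omega
    have hrest : (fun i : Fin m => c i.castSucc) = (fun i : Fin m => d i.castSucc) := by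
      apply ih
      rw [hlast] at hcd
      cases d (Fin.last m) <;> simp at hcd <;> omega
    funext i
    rcases Fin.eq_castSucc_or_eq_last i with ⟨j, rfl⟩ | rfl
    · exact congrFun hrest j
    · exact hlast

lemma listCode_injective : Function.Injective listCode := by
  intro l
  induction l with
  | nil => intro m h; cases m with
    | nil => rfl
    | cons a m => simp [listCode] at h
  | cons a l ih =>
    intro m h
    cases m with
    | nil => simp [listCode] at h
    | cons b m =>
      simp only [listCode, Nat.add_right_cancel_iff] at h
      obtain ⟨h1, h2⟩ := Nat.pair_eq_pair.mp h
      rw [h1, ih h2]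

lemma code_node (c : Col n) (ts : List (CTree n)) :
    code (node c ts) = Nat.pair (colCode c) (listCode (ts.map code)) := by
  rw [code]
  congr 1
  rw [List.attach_map_val]

lemma code_inj_list : ∀ (ts ss : List (CTree n)),
    (∀ x ∈ ts, ∀ s, code x = code s → x = s) →
    ts.map code = ss.map code → ts = ss := by
  intro ts
  induction ts with
  | nil => intro ss _ h; cases ss <;> simp_all
  | cons a ts ihl =>
    intro ss hinj h
    cases ss with
    | nil => simp at h
    | cons b ss =>
      simp only [List.map_cons, List.cons.injEq] at h
      obtain ⟨hab, hts⟩ := h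
      rw [hinj a (by simp) b hab,
        ihl ss (fun x hx => hinj x (by simp [hx])) hts]

lemma code_injective : ∀ (t s : CTree n), code t = code s → t = s := by
  intro t
  induction t using CTree.code.induct with
  | _ c ts ih =>
    intro s h
    obtain ⟨d, ss⟩ := s
    rw [code_node, code_node] at h
    obtain ⟨h1, h2⟩ := Nat.pair_eq_pair.mp h
    cases colCode_injective h1
    congr 1
    exact code_inj_list ts ss (fun x hx => ih ⟨x, hx⟩) (listCode_injective h2)

end CTree

lemma MLE.refl (t : CTree n) : MLE t t :=
  ⟨id, fun _ _ h => h, fun _ _ => rfl⟩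

lemma MLE.trans {a b c : CTree n} (h1 : MLE a b) (h2 : MLE b c) : MLE a c := by
  obtain ⟨f, hf1, hf2⟩ := h1
  obtain ⟨g, hg1, hg2⟩ := h2
  exact ⟨f ∘ g, fun w u h => hf1 _ _ (hg1 _ _ h), fun w p => (hf2 _ _).trans (hg2 _ _)⟩

/-- extraction of a minimal antichain from a list of trees -/
lemma exists_min_antichain (L : List (CTree n)) :
    ∃ X : List (CTree n), (∀ x ∈ X, x ∈ L) ∧ X.Nodup ∧
      (∀ x ∈ X, ∀ y ∈ X, x ≠ y → ¬ MLE x y) ∧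
      (∀ l ∈ L, ∃ x ∈ X, MLE x l) ∧ (L ≠ [] → X ≠ []) := by
  induction L with
  | nil => exact ⟨[], by simp, by simp, by simp, by simp, by simp⟩
  | cons a L ih =>
    obtain ⟨X, hXL, hnd, hanti, hcov, hne⟩ := ih
    by_cases hcova : ∃ x ∈ X, MLE x a
    · refine ⟨X, fun x hx => List.mem_cons_of_mem _ (hXL x hx), hnd, hanti, ?_, ?_⟩
      · intro l hl
        rcases List.mem_cons.mp hl with rfl | hl
        · exact hcova
        · exact hcov l hl
      · intro _
        obtain ⟨x, hx, _⟩ := hcova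
        intro hX; rw [hX] at hx; exact absurd hx List.not_mem_nil
    · push_neg at hcova
      refine ⟨a :: X.filter (fun y => decide (¬ MLE a y)), ?_, ?_, ?_, ?_, ?_⟩
      · intro x hx
        rcases List.mem_cons.mp hx with rfl | hx
        · exact List.mem_cons_self
        · exact List.mem_cons_of_mem _ (hXL x (List.mem_of_mem_filter hx))
      · refine List.Nodup.cons ?_ (hnd.filter _)
        intro ha
        exact hcova a (List.mem_of_mem_filter ha) (MLE.refl a)
      · intro x hx y hy hxy
        rcases List.mem_cons.mp hx with rfl | hx <;> rcases List.mem_cons.mp hy with rfl | hy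
        · exact absurd rfl hxy
        · have := List.of_mem_filter hy
          simpa using this
        · exact fun hm => hcova x (List.mem_of_mem_filter hx) hm
        · exact hanti x (List.mem_of_mem_filter hx) y (List.mem_of_mem_filter hy) hxy
      · intro l hl
        rcases List.mem_cons.mp hl with rfl | hl
        · exact ⟨l, List.mem_cons_self, MLE.refl l⟩
        · obtain ⟨x, hx, hxl⟩ := hcov l hl
          by_cases hax : MLE a x
          · exact ⟨a, List.mem_cons_self, hax.trans hxl⟩
          · exact ⟨x, List.mem_cons_of_mem _
              (List.mem_filter.mpr ⟨hx, by simpa using hax⟩), hxl⟩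
      · intro _; simp

end Aux
section Worlds

variable {n : ℕ}

namespace CTree

lemma V_of_subt (t : CTree n) (a : t.toModel.W) {s : CTree n} (hs : subt a.1 t = some s)
    (p : ℕ) : t.toModel.V a p = if h : p < n then s.color ⟨p, h⟩ else false := by
  simp [toModel, hs]

lemma V_root (t : CTree n) (p : ℕ) :
    t.toModel.V t.root p = if h : p < n then t.color ⟨p, h⟩ else false :=
  V_of_subt t t.root (subt_nil t) p

lemma R_def (t : CTree n) (a b : t.toModel.W) : t.toModel.R a b ↔ a.1 <+: b.1 := Iff.rfl

lemma root_R (t : CTree n) (b : t.toModel.W) : t.toModel.R t.root b :=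
  List.nil_prefix

lemma not_R_root (t : CTree n) (a : t.toModel.W) (ha : a.1 ≠ []) :
    ¬ t.toModel.R a t.root := by
  intro h
  exact ha (List.prefix_nil.mp h)

lemma eq_root (t : CTree n) (a : t.toModel.W) (ha : a.1 = []) : a = t.root :=
  Subtype.ext ha

lemma world_head (t : CTree n) (a : t.toModel.W) (ha : a.1 ≠ []) :
    ∃ x, t.children[a.1.headI]? = some x ∧ (subt a.1.tail x).isSome = true := by
  obtain ⟨l, hl⟩ := a
  cases l with
  | nil => exact absurd rfl ha
  | cons i l =>
    simp only [List.headI, List.tail]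
    rw [subt_cons] at hl
    cases h : t.children[i]? with
    | none => rw [h] at hl; simp at hl
    | some x =>
      rw [h, Option.bind_some] at hl
      exact ⟨x, rfl, hl⟩

lemma cons_head_tail {a : List ℕ} (ha : a ≠ []) : a = a.headI :: a.tail := by
  cases a with
  | nil => exact absurd rfl ha
  | cons i l => rfl

lemma cons_world (t : CTree n) {i : ℕ} {x : CTree n} (hx : t.children[i]? = some x)
    (l : List ℕ) (hl : (subt l x).isSome = true) : (subt (i :: l) t).isSome = true := by
  rw [subt_cons, hx, Option.bind_some]; exact hl

lemma V_cons (t : CTree n) (a : t.toModel.W) {i : ℕ} {x : CTree n} {l : List ℕ}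
    (ha : a.1 = i :: l) (hx : t.children[i]? = some x) (hl : (subt l x).isSome = true)
    (p : ℕ) : t.toModel.V a p = x.toModel.V ⟨l, hl⟩ p := by
  obtain ⟨s, hs⟩ := Option.isSome_iff_exists.mp hl
  rw [V_of_subt t a (show subt a.1 t = some s by
    rw [ha, subt_cons, hx, Option.bind_some]; exact hs),
    V_of_subt x ⟨l, hl⟩ hs]

lemma R_cons_iff (t : CTree n) (a b : t.toModel.W) {i l i' l'}
    (ha : a.1 = i :: l) (hb : b.1 = i' :: l') :
    t.toModel.R a b ↔ (i = i' ∧ l <+: l') := by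
  rw [R_def, ha, hb, List.cons_prefix_cons]

end CTree

lemma nodup_getElem?_inj {α : Type*} {X : List α} (h : X.Nodup) {i j : ℕ} {x : α}
    (hi : X[i]? = some x) (hj : X[j]? = some x) : i = j := by
  obtain ⟨hi1, hi2⟩ := List.getElem?_eq_some_iff.mp hi
  obtain ⟨hj1, hj2⟩ := List.getElem?_eq_some_iff.mp hj
  exact (List.Nodup.getElem_inj_iff h).mp (hi2.trans hj2.symm)

/-- inversion lemmas for `UMem` -/
lemma UMem.children_umem {c : Col n} {ts : List (CTree n)} (h : UMem (CTree.node c ts)) :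
    ∀ t ∈ ts, UMem t := by
  cases h with
  | single => intro t ht; simp at ht
  | step _ _ _ h2 => exact h2

lemma UMem.children_anti {c : Col n} {ts : List (CTree n)} (h : UMem (CTree.node c ts)) :
    ∀ t ∈ ts, ∀ s ∈ ts, t ≠ s → ¬ MLE t s := by
  cases h with
  | single => intro t ht; simp at ht
  | step _ _ _ _ _ h4 => exact h4

lemma UMem.children_colLT {c : Col n} {ts : List (CTree n)} (h : UMem (CTree.node c ts)) :
    ∀ t ∈ ts, ∀ (l : List ℕ) (s : CTree n), CTree.subt l t = some s → ColLT c s.color := by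
  cases h with
  | single => intro t ht; simp at ht
  | step _ _ _ _ _ _ h5 => exact h5

/-- subtree colors of a member of the universal model dominate the root color -/
lemma UMem_subt_colLE {c : Col n} {x : CTree n} (hU : UMem x) (hc : ColLE c x.color)
    {l : List ℕ} {s : CTree n} (hs : CTree.subt l x = some s) :
    ColLE c s.color ∧ (s.color = c → l = []) := by
  cases l with
  | nil =>
    rw [CTree.subt_nil, Option.some_inj] at hs
    subst hs
    exact ⟨hc, fun _ => rfl⟩
  | cons i l =>
    obtain ⟨cx, ts⟩ := x
    rw [CTree.subt_cons] at hs
    cases ht : ts[i]? with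
    | none => rw [CTree.children] at hs; rw [ht] at hs; simp at hs
    | some t0 =>
      rw [CTree.children] at hs; rw [ht, Option.bind_some] at hs
      have hlt := hU.children_colLT t0 (List.mem_of_getElem? ht) l s hs
      have hlt2 := ColLT_of_le_of_lt hc hlt
      exact ⟨hlt2.1, fun he => absurd he.symm hlt2.2⟩

lemma UMem.mem_children' {t : CTree n} (h : UMem t) : ∀ x ∈ t.children, UMem x := by
  obtain ⟨c, ts⟩ := t
  exact h.children_umem

lemma UMem.children_colLT' {t : CTree n} (h : UMem t) :
    ∀ x ∈ t.children, ∀ (l : List ℕ) (s : CTree n), CTree.subt l x = some s →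
      ColLT t.color s.color := by
  obtain ⟨c, ts⟩ := t
  exact h.children_colLT

lemma CTree.eq_root_of_no_children (t : CTree n) (hch : t.children = [])
    (a : t.toModel.W) : a = t.root := by
  apply CTree.eq_root
  by_contra ha
  obtain ⟨x, hx, _⟩ := CTree.world_head t a ha
  rw [hch] at hx
  simp at hx

/-- sorting a nodup list of trees by code -/
lemma exists_sorted (X : List (CTree n)) (hnd : X.Nodup) :
    ∃ Y : List (CTree n), (∀ x, x ∈ Y ↔ x ∈ X) ∧ Y.Nodup ∧
      List.Chain' (fun a b => CTree.code a < CTree.code b) Y ∧ (X ≠ [] → Y ≠ []) := by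
  classical
  set le : CTree n → CTree n → Bool := fun a b => decide (CTree.code a ≤ CTree.code b) with hle
  refine ⟨X.mergeSort le, ?_, ?_, ?_, ?_⟩
  · intro x
    exact (List.mergeSort_perm X le).mem_iff
  · exact (List.mergeSort_perm X le).symm.nodup hnd
  · have hs := List.pairwise_mergeSort (le := le)
      (by intro a b c hab hbc; simp only [hle, decide_eq_true_eq] at *; omega)
      (by intro a b; simp only [hle, Bool.or_eq_true, decide_eq_true_eq]; omega) X
    have hnd' := (List.mergeSort_perm X le).symm.nodup hnd
    apply List.Pairwise.isChain
    refine (hs.and hnd').imp ?_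
    rintro a b ⟨h1, h2⟩
    simp only [hle, decide_eq_true_eq] at h1
    exact lt_of_le_of_ne h1 (fun he => h2 (CTree.code_injective a b he))
  · intro hX he
    apply hX
    have hp := List.mergeSort_perm X le
    rw [he] at hp
    exact hp.symm.eq_nil

end Worlds

/-- the reduction property -/
def Reduces (n : ℕ) (M : KStruct) (r : M.W) (t : CTree n) : Prop :=
  UMem t ∧
  (∃ f : M.W → t.toModel.W, Monotonic M t.toModel f ∧ Function.Surjective f) ∧
  (∃ g : t.toModel.W → M.W, Function.Injective g ∧
    (∀ a b, t.toModel.R a b ↔ M.R (g a) (g b)) ∧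
    (∀ a p, M.V (g a) p = t.toModel.V a p) ∧
    g t.root = r)
section TreeFacts

variable {M : KStruct} {r : M.W}

lemma eq_root_of_R_root (hM : M.IsModel) (hr : IsRoot M r) {w : M.W} (h : M.R w r) :
    w = r :=
  hM.2.2.1 w r h (hr w)

lemma immSucc_eq_of_R (hM : M.IsModel) (hr : IsRoot M r) {u u' : M.W}
    (h : ImmSucc M r u) (h' : ImmSucc M r u') (hR : M.R u u') : u = u' := by
  rcases h'.2.2 u (hr u) hR with he | he
  · exact absurd he.symm h.2.1
  · exact he

lemma immSucc_unique (hM : M.IsModel) (htree : IsTree M r) {u u' : M.W}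
    (h : ImmSucc M r u) (h' : ImmSucc M r u') {w : M.W}
    (hw : M.R u w) (hw' : M.R u' w) : u = u' := by
  rcases htree.2.2 w u u' hw hw' with hc | hc
  · exact immSucc_eq_of_R hM htree.1 h h' hc
  · exact (immSucc_eq_of_R hM htree.1 h' h hc).symm

/-- a finite nonempty linearly ordered set has a least element -/
lemma exists_min_finset (hM : M.IsModel) (s : Finset M.W) (hne : s.Nonempty)
    (hlin : ∀ a ∈ s, ∀ b ∈ s, M.R a b ∨ M.R b a) : ∃ a ∈ s, ∀ b ∈ s, M.R a b := by
  classical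
  revert hne hlin
  induction s using Finset.induction_on with
  | empty => intro hne _; exact absurd hne (by simp)
  | @insert a s' hx ih =>
    intro _ hlin
    by_cases hs' : s'.Nonempty
    · obtain ⟨m, hm, hmin⟩ := ih hs' (fun x hx y hy =>
        hlin x (Finset.mem_insert_of_mem hx) y (Finset.mem_insert_of_mem hy))
      rcases hlin a (Finset.mem_insert_self a s') m (Finset.mem_insert_of_mem hm) with hc | hc
      · refine ⟨a, Finset.mem_insert_self a s', ?_⟩
        intro b hb
        rcases Finset.mem_insert.mp hb with rfl | hb
        · exact hM.1 b
        · exact hM.2.1 a m b hc (hmin b hb)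
      · refine ⟨m, Finset.mem_insert_of_mem hm, ?_⟩
        intro b hb
        rcases Finset.mem_insert.mp hb with rfl | hb
        · exact hc
        · exact hmin b hb
    · rw [Finset.not_nonempty_iff_eq_empty] at hs'
      subst hs'
      refine ⟨a, Finset.mem_insert_self a _, ?_⟩
      intro b hb
      rcases Finset.mem_insert.mp hb with rfl | hb
      · exact hM.1 b
      · simp at hb

lemma exists_immSucc_below [Fintype M.W] (hM : M.IsModel) (htree : IsTree M r)
    {w : M.W} (hw : w ≠ r) : ∃ u, ImmSucc M r u ∧ M.R u w := by
  classical
  set P : Finset M.W := Finset.univ.filter (fun u => M.R u w ∧ u ≠ r) with hP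
  have hmemP : ∀ u, u ∈ P ↔ (M.R u w ∧ u ≠ r) := by
    intro u; simp [hP]
  have hne : P.Nonempty := ⟨w, (hmemP w).mpr ⟨hM.1 w, hw⟩⟩
  have hlin : ∀ a ∈ P, ∀ b ∈ P, M.R a b ∨ M.R b a := by
    intro a ha b hb
    exact htree.2.2 w a b ((hmemP a).mp ha).1 ((hmemP b).mp hb).1
  obtain ⟨u, hu, hmin⟩ := exists_min_finset hM P hne hlin
  obtain ⟨huw, hur⟩ := (hmemP u).mp hu
  refine ⟨u, ⟨htree.1 u, fun he => hur he.symm, ?_⟩, huw⟩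
  intro v hrv hvu
  by_cases hvr : v = r
  · exact Or.inl hvr
  · right
    have hv : v ∈ P := (hmemP v).mpr ⟨hM.2.1 v u w hvu huw, hvr⟩
    exact hM.2.2.1 v u hvu (hmin v hv)

end TreeFacts

/-- the monochromatic case -/
lemma mono_case (n : ℕ) (M : KStruct) (hM : M.IsNModel n) (r : M.W)
    (hmono : ∀ w p, M.V w p = M.V r p) : ∃ t : CTree n, Reduces n M r t := by
  set c : Col n := fun i => M.V r i with hc
  set t : CTree n := CTree.node c [] with ht
  have hall : ∀ a : t.toModel.W, a = t.root := by
    intro a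
    apply CTree.eq_root
    by_contra ha
    obtain ⟨x, hx, _⟩ := CTree.world_head t a ha
    have hx' : ([] : List (CTree n))[(a.1).headI]? = some x := hx
    simp at hx'
  have hV : ∀ p, t.toModel.V t.root p = M.V r p := by
    intro p
    rw [CTree.V_root]
    split
    · rfl
    · exact (hM.2 r p (Nat.le_of_not_lt (by assumption))).symm
  refine ⟨t, UMem.single c, ⟨fun _ => t.root, ⟨?_, ?_⟩, ?_⟩, ⟨fun _ => r, ?_, ?_, ?_, rfl⟩⟩
  · intro w u _
    exact CTree.root_R t _
  · intro w p
    rw [hV, hmono w p]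
  · intro b
    exact ⟨r, (hall b).symm⟩
  · intro a b _
    rw [hall a, hall b]
  · intro a b
    rw [hall a, hall b]
    constructor
    · intro _; exact hM.1.1 r
    · intro _; exact CTree.root_R t _
  · intro a p
    rw [hall a, hV, hmono r p]
/-- the main construction for the non-monochromatic case -/
lemma step_case (n : ℕ) (M : KStruct) [Fintype M.W] (hM : M.IsNModel n) (r : M.W)
    (htree : IsTree M r)
    (hnm : ¬ ∀ w p, M.V w p = M.V r p)
    (T : ∀ u : M.W, ImmSucc M r u → CTree n)
    (hUM : ∀ u h, UMem (T u h))
    (fu : ∀ u h, {v : M.W // M.R u v} → (T u h).toModel.W)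
    (hfuR : ∀ u h a b, M.R a.1 b.1 → (T u h).toModel.R (fu u h a) (fu u h b))
    (hfuV : ∀ u h a p, (T u h).toModel.V (fu u h a) p = M.V a.1 p)
    (hfuS : ∀ u h, Function.Surjective (fu u h))
    (gu : ∀ u h, (T u h).toModel.W → M.W)
    (hguR : ∀ u h a b, (T u h).toModel.R a b ↔ M.R (gu u h a) (gu u h b))
    (hguV : ∀ u h a p, M.V (gu u h a) p = (T u h).toModel.V a p)
    (hguRoot : ∀ u h, gu u h (CTree.root _) = u)
    (hguIn : ∀ u h a, M.R u (gu u h a)) :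
    ∃ t : CTree n, Reduces n M r t := by
  classical
  obtain ⟨hMod, hbound⟩ := hM
  have hrefl := hMod.1
  have htrans := hMod.2.1
  have hanti := hMod.2.2.1
  have hpers := hMod.2.2.2
  have hroot := htree.1
  set c : Col n := fun i => M.V r i with hcdef
  -- root colors of the reduced child trees
  have hTcol : ∀ u (h : ImmSucc M r u) (p : ℕ),
      (if hp : p < n then (T u h).color ⟨p, hp⟩ else false) = M.V u p := by
    intro u h p
    have hv := hguV u h (CTree.root _) p
    rw [hguRoot, CTree.V_root] at hv
    exact hv.symm
  have hTcolLE : ∀ u (h : ImmSucc M r u), ColLE c (T u h).color := by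
    intro u h i hi
    have hv := hTcol u h i
    rw [dif_pos i.2] at hv
    simp only [Fin.eta] at hv
    rw [hv]
    exact hpers r u i (hroot u) hi
  -- the pieces of the reduced child trees
  set P : ∀ u : M.W, ImmSucc M r u → List (CTree n) :=
    fun u h => if (T u h).color = c then (T u h).children else [T u h] with hPdef
  set us : List M.W := immSuccList M r with husdef
  have hus : ∀ u, u ∈ us ↔ ImmSucc M r u := by
    intro u
    simp [husdef, immSuccList, Finset.mem_toList]
  set L : List (CTree n) := us.attach.flatMap (fun v => P v.1 ((hus v.1).mp v.2)) with hLdef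
  have hmemL : ∀ s, s ∈ L ↔ ∃ u, ∃ h : ImmSucc M r u, s ∈ P u h := by
    intro s
    rw [hLdef, List.mem_flatMap]
    constructor
    · rintro ⟨v, hv, hs⟩
      exact ⟨v.1, (hus v.1).mp v.2, hs⟩
    · rintro ⟨u, h, hs⟩
      exact ⟨⟨u, (hus u).mpr h⟩, List.mem_attach _ _, hs⟩
  have hPmem : ∀ u h x, x ∈ P u h →
      (((T u h).color = c ∧ ∃ i : ℕ, (T u h).children[i]? = some x) ∨
       ((T u h).color ≠ c ∧ x = T u h)) := by
    intro u h x hx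
    simp only [hPdef] at hx
    by_cases hcc : (T u h).color = c
    · rw [if_pos hcc] at hx
      exact Or.inl ⟨hcc, List.getElem?_of_mem hx⟩
    · rw [if_neg hcc] at hx
      exact Or.inr ⟨hcc, by simpa using hx⟩
  have hLU : ∀ x ∈ L, UMem x := by
    intro x hx
    obtain ⟨u, h, hxP⟩ := (hmemL x).mp hx
    rcases hPmem u h x hxP with ⟨hcc, i, hi⟩ | ⟨hcc, rfl⟩
    · exact (hUM u h).mem_children' x (List.mem_of_getElem? hi)
    · exact hUM u h
  have hLcolLT : ∀ x ∈ L, ∀ (l : List ℕ) (s : CTree n),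
      CTree.subt l x = some s → ColLT c s.color := by
    intro x hx l s hs
    obtain ⟨u, h, hxP⟩ := (hmemL x).mp hx
    rcases hPmem u h x hxP with ⟨hcc, i, hi⟩ | ⟨hcc, rfl⟩
    · have hlt := (hUM u h).children_colLT' x (List.mem_of_getElem? hi) l s hs
      rwa [hcc] at hlt
    · obtain ⟨hle, hne⟩ := UMem_subt_colLE (hUM u h) (hTcolLE u h) hs
      refine ⟨hle, fun he => ?_⟩
      have hl0 := hne he.symm
      subst hl0
      rw [CTree.subt_nil, Option.some_inj] at hs
      subst hs
      exact hcc he.symm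
  have hLne : L ≠ [] := by
    intro hL
    apply hnm
    have hPempty : ∀ u h, P u h = [] := by
      intro u h
      by_contra hne
      obtain ⟨x, hx⟩ := List.exists_mem_of_ne_nil _ hne
      have hxL : x ∈ L := (hmemL x).mpr ⟨u, h, hx⟩
      rw [hL] at hxL
      simp at hxL
    have hTc : ∀ u h, (T u h).color = c ∧ (T u h).children = [] := by
      intro u h
      have h1 : (T u h).color = c := by
        by_contra hcc
        have hps : P u h = [T u h] := by simp only [hPdef]; rw [if_neg hcc]
        rw [hPempty] at hps
        simp at hps
      have h2 : (T u h).children = [] := by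
        have hps : P u h = (T u h).children := by simp only [hPdef]; rw [if_pos h1]
        rw [hPempty] at hps
        exact hps.symm
      exact ⟨h1, h2⟩
    intro w p
    by_cases hw : w = r
    · rw [hw]
    · obtain ⟨u, h, huw⟩ := exists_immSucc_below hMod htree hw
      have hv := hfuV u h ⟨w, huw⟩ p
      rw [CTree.eq_root_of_no_children (T u h) (hTc u h).2 (fu u h ⟨w, huw⟩),
        CTree.V_root] at hv
      rw [← hv]
      rw [(hTc u h).1]
      split
      · rfl
      · exact (hbound r p (Nat.le_of_not_lt (by assumption))).symm
  -- the antichain of minimal pieces, sorted by code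
  obtain ⟨X₀, hX₀L, hX₀nd, hX₀anti, hX₀cov, hX₀ne⟩ := exists_min_antichain L
  obtain ⟨X, hXiff, hXnd, hXchain, hXne'⟩ := exists_sorted X₀ hX₀nd
  have hXne : X ≠ [] := hXne' (hX₀ne hLne)
  have hXL : ∀ x ∈ X, x ∈ L := fun x hx => hX₀L x ((hXiff x).mp hx)
  have hXanti : ∀ x ∈ X, ∀ y ∈ X, x ≠ y → ¬ MLE x y := fun x hx y hy =>
    hX₀anti x ((hXiff x).mp hx) y ((hXiff y).mp hy)
  have hXcov : ∀ l ∈ L, ∃ x ∈ X, MLE x l := by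
    intro l hl
    obtain ⟨x, hx, hm⟩ := hX₀cov l hl
    exact ⟨x, (hXiff x).mpr hx, hm⟩
  set t : CTree n := CTree.node c X with htdef
  have htch : t.children = X := rfl
  have htcol : t.color = c := rfl
  have hUMt : UMem t := UMem.step c X hXne (fun x hx => hLU x (hXL x hx)) hXchain
    (fun a ha b hb => hXanti a ha b hb)
    (fun x hx l s hs => hLcolLT x (hXL x hx) l s hs)
  -- non-dependent choosers
  set dflt : CTree n := CTree.node c [] with hdfltdef
  set xat : CTree n → List ℕ → CTree n :=
    fun s l => (s.children[l.headI]?).getD dflt with hxatdef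
  have hxat : ∀ (s : CTree n) (a : s.toModel.W), a.1 ≠ [] →
      s.children[a.1.headI]? = some (xat s a.1) ∧
      (CTree.subt a.1.tail (xat s a.1)).isSome = true := by
    intro s a ha
    obtain ⟨x, hx1, hx2⟩ := CTree.world_head s a ha
    have hx : xat s a.1 = x := by simp only [hxatdef]; rw [hx1]; rfl
    rw [hx]
    exact ⟨hx1, hx2⟩
  have hidx0 : ∀ x : CTree n, ∃ i : ℕ, x ∈ X → X[i]? = some x := by
    intro x
    by_cases hx : x ∈ X
    · obtain ⟨i, hi⟩ := List.getElem?_of_mem hx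
      exact ⟨i, fun _ => hi⟩
    · exact ⟨0, fun h => absurd h hx⟩
  choose idx hidx using hidx0
  -- embedding of the world of a child into the world of t
  set emb : ∀ x : CTree n, x.toModel.W → t.toModel.W := fun x a =>
    if hx : x ∈ X then ⟨idx x :: a.1, CTree.cons_world t (hidx x hx) a.1 a.2⟩
    else t.root with hembdef
  have hembpos : ∀ x (hx : x ∈ X) (a : x.toModel.W), (emb x a).1 = idx x :: a.1 := by
    intro x hx a
    simp only [hembdef]
    exact congrArg Subtype.val (dif_pos hx)
  have hembV : ∀ x (hx : x ∈ X) (a : x.toModel.W) p,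
      t.toModel.V (emb x a) p = x.toModel.V a p := by
    intro x hx a p
    exact CTree.V_cons t (emb x a) (hembpos x hx a) (hidx x hx) a.2 p
  have hembR : ∀ x (hx : x ∈ X) (a b : x.toModel.W),
      x.toModel.R a b → t.toModel.R (emb x a) (emb x b) := by
    intro x hx a b hab
    rw [CTree.R_cons_iff t _ _ (hembpos x hx a) (hembpos x hx b)]
    exact ⟨rfl, hab⟩
  -- the covering minimal elements
  have hcv0 : ∀ s : CTree n, ∃ x, s ∈ L → x ∈ X ∧ MLE x s := by
    intro s
    by_cases hs : s ∈ L
    · obtain ⟨x, hx1, hx2⟩ := hXcov s hs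
      exact ⟨x, fun _ => ⟨hx1, hx2⟩⟩
    · exact ⟨dflt, fun h => absurd h hs⟩
  choose cvx hcvx using hcv0
  have hphi0 : ∀ s : CTree n, ∃ φ : s.toModel.W → (cvx s).toModel.W,
      s ∈ L → Monotonic s.toModel (cvx s).toModel φ := by
    intro s
    by_cases hs : s ∈ L
    · obtain ⟨φ, hφ⟩ := (hcvx s hs).2
      exact ⟨φ, fun _ => hφ⟩
    · exact ⟨fun _ => CTree.root _, fun h => absurd h hs⟩
  choose φ hφ using hphi0
  -- the map sending the world of a piece into the world of t
  set dest : ∀ s : CTree n, s.toModel.W → t.toModel.W := fun s a =>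
    if s ∈ X then emb s a else emb (cvx s) (φ s a) with hdestdef
  have hdestV : ∀ s (hs : s ∈ L) (a : s.toModel.W) p,
      t.toModel.V (dest s a) p = s.toModel.V a p := by
    intro s hs a p
    simp only [hdestdef]
    split
    · exact hembV s (by assumption) a p
    · rw [hembV (cvx s) (hcvx s hs).1]
      exact ((hφ s hs).2 a p)
  have hdestR : ∀ s (hs : s ∈ L) (a b : s.toModel.W),
      s.toModel.R a b → t.toModel.R (dest s a) (dest s b) := by
    intro s hs a b hab
    simp only [hdestdef]
    split
    · exact hembR s (by assumption) a b hab
    · exact hembR (cvx s) (hcvx s hs).1 _ _ ((hφ s hs).1 a b hab)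
  have hdestpos : ∀ s (hs : s ∈ L) (a : s.toModel.W), (dest s a).1 ≠ [] := by
    intro s hs a
    simp only [hdestdef]
    split
    · rw [hembpos s (by assumption) a]; simp
    · rw [hembpos (cvx s) (hcvx s hs).1 _]; simp
  have hdestcongr : ∀ (s s' : CTree n) (hss : s = s') (a : s.toModel.W)
      (a' : s'.toModel.W), a.1 = a'.1 → dest s a = dest s' a' := by
    rintro s _ rfl a a' h
    rw [Subtype.ext h]
  have hdestX : ∀ s (hs : s ∈ X) (a : s.toModel.W), dest s a = emb s a := by
    intro s hs a
    simp only [hdestdef]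
    rw [if_pos hs]
  -- membership of pieces in L
  have hxatL : ∀ u (h : ImmSucc M r u) (a : (T u h).toModel.W) (ha : a.1 ≠ []),
      (T u h).color = c → xat (T u h) a.1 ∈ L := by
    intro u h a ha hcc
    refine (hmemL _).mpr ⟨u, h, ?_⟩
    simp only [hPdef]
    rw [if_pos hcc]
    exact List.mem_of_getElem? (hxat (T u h) a ha).1
  have hTmemL : ∀ u (h : ImmSucc M r u), (T u h).color ≠ c → T u h ∈ L := by
    intro u h hcc
    refine (hmemL _).mpr ⟨u, h, ?_⟩
    simp only [hPdef]
    rw [if_neg hcc]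
    simp
  -- the map from the world of a reduced child tree into the world of t
  set ρ : ∀ u (h : ImmSucc M r u), (T u h).toModel.W → t.toModel.W := fun u h a =>
    if hcc : (T u h).color = c then
      if ha : a.1 = [] then t.root
      else dest (xat (T u h) a.1) ⟨a.1.tail, (hxat (T u h) a ha).2⟩
    else dest (T u h) a with hρdef
  have hρV : ∀ u h (a : (T u h).toModel.W) p,
      t.toModel.V (ρ u h a) p = (T u h).toModel.V a p := by
    intro u h a p
    simp only [hρdef]
    by_cases hcc : (T u h).color = c
    · rw [dif_pos hcc]
      by_cases ha : a.1 = []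
      · rw [dif_pos ha, CTree.V_root, CTree.eq_root _ a ha, CTree.V_root, htcol, hcc]
      · rw [dif_neg ha]; refine (hdestV _ (hxatL u h a ha hcc) _ p).trans ?_
        exact (CTree.V_cons (T u h) a (CTree.cons_head_tail ha)
          (hxat (T u h) a ha).1 (hxat (T u h) a ha).2 p).symm
    · rw [dif_neg hcc, hdestV _ (hTmemL u h hcc)]
  have hρR : ∀ u h (a b : (T u h).toModel.W), (T u h).toModel.R a b →
      t.toModel.R (ρ u h a) (ρ u h b) := by
    intro u h a b hab
    simp only [hρdef]
    by_cases hcc : (T u h).color = c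
    · rw [dif_pos hcc, dif_pos hcc]
      by_cases ha : a.1 = []
      · rw [dif_pos ha]
        exact CTree.root_R t _
      · have hb : b.1 ≠ [] := by
          intro hb
          exact ha (List.prefix_nil.mp (hb ▸ hab))
        rw [dif_neg ha, dif_neg hb]
        have hab' : a.1.headI :: a.1.tail <+: b.1.headI :: b.1.tail := by
          rw [← CTree.cons_head_tail ha, ← CTree.cons_head_tail hb]
          exact hab
        obtain ⟨hhead, htail⟩ := List.cons_prefix_cons.mp hab'
        have hxeq : xat (T u h) b.1 = xat (T u h) a.1 := by
          simp only [hxatdef]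
          rw [hhead]
        have hpf : (CTree.subt b.1.tail (xat (T u h) a.1)).isSome = true := by
          rw [← hxeq]
          exact (hxat (T u h) b hb).2
        rw [hdestcongr (xat (T u h) b.1) (xat (T u h) a.1) hxeq
          ⟨b.1.tail, (hxat (T u h) b hb).2⟩ ⟨b.1.tail, hpf⟩ rfl]
        exact hdestR _ (hxatL u h a ha hcc) _ _ htail
    · rw [dif_neg hcc, dif_neg hcc]
      exact hdestR _ (hTmemL u h hcc) a b hab
  -- the immediate successor below a point
  have huof0 : ∀ w : M.W, ∃ u, w ≠ r → ImmSucc M r u ∧ M.R u w := by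
    intro w
    by_cases hw : w = r
    · exact ⟨r, fun h => absurd hw h⟩
    · obtain ⟨u, hu⟩ := exists_immSucc_below hMod htree hw
      exact ⟨u, fun _ => hu⟩
  choose uof huof using huof0
  set f : M.W → t.toModel.W := fun w =>
    if hw : w = r then t.root
    else ρ (uof w) (huof w hw).1 (fu (uof w) (huof w hw).1 ⟨w, (huof w hw).2⟩) with hfdef
  have hρfu : ∀ u u' (huu : u = u') (h : ImmSucc M r u) (h' : ImmSucc M r u') (w : M.W)
      (hw : M.R u w) (hw' : M.R u' w),
      ρ u h (fu u h ⟨w, hw⟩) = ρ u' h' (fu u' h' ⟨w, hw'⟩) := by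
    rintro u _ rfl h h' w hw hw'
    rfl
  have hfR : ∀ w w', M.R w w' → t.toModel.R (f w) (f w') := by
    intro w w' hww
    simp only [hfdef]
    by_cases hw : w = r
    · rw [dif_pos hw]
      exact CTree.root_R t _
    · have hw' : w' ≠ r := by
        intro he
        exact hw (hanti w r (he ▸ hww) (hroot w))
      rw [dif_neg hw, dif_neg hw']
      have huu : uof w' = uof w := (immSucc_unique hMod htree (huof w hw).1
        (huof w' hw').1 (htrans _ _ _ (huof w hw).2 hww) (huof w' hw').2).symm
      rw [hρfu (uof w') (uof w) huu (huof w' hw').1 (huof w hw).1 w'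
        (huof w' hw').2 (htrans _ _ _ (huof w hw).2 hww)]
      exact hρR (uof w) (huof w hw).1 _ _
        (hfuR (uof w) (huof w hw).1 ⟨w, (huof w hw).2⟩
          ⟨w', htrans _ _ _ (huof w hw).2 hww⟩ hww)
  have hfV : ∀ w p, t.toModel.V (f w) p = M.V w p := by
    intro w p
    simp only [hfdef]
    by_cases hw : w = r
    · rw [dif_pos hw, CTree.V_root, hw]
      split
      · rfl
      · exact (hbound r p (Nat.le_of_not_lt (by assumption))).symm
    · rw [dif_neg hw, hρV, hfuV]
  have hfS : Function.Surjective f := by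
    intro b
    by_cases hb : b.1 = []
    · refine ⟨r, ?_⟩
      have hfr : f r = t.root := by
        simp only [hfdef]
        rw [dif_pos trivial]
      rw [hfr]
      exact (CTree.eq_root t b hb).symm
    · have hx1 := (hxat t b hb).1
      have hxX : (xat t b.1) ∈ X := List.mem_of_getElem? hx1
      have hxL := hXL _ hxX
      have hm : idx (xat t b.1) = b.1.headI :=
        nodup_getElem?_inj hXnd (hidx _ hxX) hx1
      have hembx : emb (xat t b.1) ⟨b.1.tail, (hxat t b hb).2⟩ = b := by
        apply Subtype.ext
        refine (hembpos _ hxX _).trans ?_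
        show idx (xat t b.1) :: b.1.tail = b.1
        rw [hm]
        exact (CTree.cons_head_tail hb).symm
      obtain ⟨u, h, hxP⟩ := (hmemL _).mp hxL
      rcases hPmem u h _ hxP with ⟨hcc, i, hi⟩ | ⟨hcc, hxT⟩
      · have hA2 : (CTree.subt (i :: b.1.tail) (T u h)).isSome = true :=
          CTree.cons_world (T u h) hi b.1.tail (hxat t b hb).2
        obtain ⟨w₀, hw₀⟩ := hfuS u h ⟨i :: b.1.tail, hA2⟩
        have hwr : w₀.1 ≠ r := by
          intro he
          have hur : M.R u r := he ▸ w₀.2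
          exact h.2.1 (hanti u r hur (hroot u)).symm
        refine ⟨w₀.1, ?_⟩
        simp only [hfdef]
        rw [dif_neg hwr]
        have huu : uof w₀.1 = u := immSucc_unique hMod htree (huof w₀.1 hwr).1 h
          (huof w₀.1 hwr).2 w₀.2
        rw [hρfu (uof w₀.1) u huu (huof w₀.1 hwr).1 h w₀.1 (huof w₀.1 hwr).2 w₀.2]
        have hfw : fu u h ⟨w₀.1, w₀.2⟩ = ⟨i :: b.1.tail, hA2⟩ := hw₀
        rw [hfw]
        simp only [hρdef]
        rw [dif_pos hcc,
          dif_neg (show ¬((⟨i :: b.1.tail, hA2⟩ : (T u h).toModel.W).1 = []) by simp)]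
        have hxx : xat (T u h) (i :: b.1.tail) = xat t b.1 := by
          simp only [hxatdef]
          rw [show (i :: b.1.tail).headI = i from rfl, hi]
          rfl
        refine (hdestcongr _ (xat t b.1) hxx _ ⟨b.1.tail, (hxat t b hb).2⟩ (by rfl)).trans ?_
        refine (hdestX _ hxX _).trans ?_
        exact hembx
      · have hA2 : (CTree.subt b.1.tail (T u h)).isSome = true := by
          rw [← hxT]
          exact (hxat t b hb).2
        obtain ⟨w₀, hw₀⟩ := hfuS u h ⟨b.1.tail, hA2⟩
        have hwr : w₀.1 ≠ r := by
          intro he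
          have hur : M.R u r := he ▸ w₀.2
          exact h.2.1 (hanti u r hur (hroot u)).symm
        refine ⟨w₀.1, ?_⟩
        simp only [hfdef]
        rw [dif_neg hwr]
        have huu : uof w₀.1 = u := immSucc_unique hMod htree (huof w₀.1 hwr).1 h
          (huof w₀.1 hwr).2 w₀.2
        rw [hρfu (uof w₀.1) u huu (huof w₀.1 hwr).1 h w₀.1 (huof w₀.1 hwr).2 w₀.2]
        have hfw : fu u h ⟨w₀.1, w₀.2⟩ = ⟨b.1.tail, hA2⟩ := hw₀
        rw [hfw]
        simp only [hρdef]
        rw [dif_neg hcc]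
        rw [hdestcongr (T u h) (xat t b.1) hxT.symm ⟨b.1.tail, hA2⟩
          ⟨b.1.tail, (hxat t b hb).2⟩ rfl]
        refine (hdestX _ hxX _).trans ?_
        exact hembx
  -- witnesses for members of the antichain
  have hwit0 : ∀ x : CTree n, ∃ u : M.W, x ∈ X → ∃ h : ImmSucc M r u, x ∈ P u h := by
    intro x
    by_cases hx : x ∈ X
    · obtain ⟨u, h, hp⟩ := (hmemL x).mp (hXL x hx)
      exact ⟨u, fun _ => ⟨h, hp⟩⟩
    · exact ⟨r, fun h => absurd h hx⟩
  choose wu hwu using hwit0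
  have wh : ∀ x, x ∈ X → ImmSucc M r (wu x) := fun x hx => (hwu x hx).choose
  have wP : ∀ x (hx : x ∈ X), x ∈ P (wu x) (wh x hx) := fun x hx => (hwu x hx).choose_spec
  have hcidx0 : ∀ s x : CTree n, ∃ i : ℕ, x ∈ s.children → s.children[i]? = some x := by
    intro s x
    by_cases hx : x ∈ s.children
    · obtain ⟨i, hi⟩ := List.getElem?_of_mem hx
      exact ⟨i, fun _ => hi⟩
    · exact ⟨0, fun h => absurd h hx⟩
  choose cidx hcidx using hcidx0
  -- membership facts
  have hwchild : ∀ x (hx : x ∈ X), (T (wu x) (wh x hx)).color = c →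
      (T (wu x) (wh x hx)).children[cidx (T (wu x) (wh x hx)) x]? = some x := by
    intro x hx hcc
    have hp := wP x hx
    simp only [hPdef] at hp
    rw [if_pos hcc] at hp
    exact hcidx _ x hp
  have hwT : ∀ x (hx : x ∈ X), (T (wu x) (wh x hx)).color ≠ c →
      x = T (wu x) (wh x hx) := by
    intro x hx hcc
    have hp := wP x hx
    simp only [hPdef] at hp
    rw [if_neg hcc] at hp
    simpa using hp
  -- position prefixes inside the reduced child trees
  set pre : CTree n → List ℕ := fun x =>
    if hx : x ∈ X then
      (if (T (wu x) (wh x hx)).color = c then [cidx (T (wu x) (wh x hx)) x] else [])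
    else [] with hpredef
  -- the embedding g
  set g : t.toModel.W → M.W := fun b =>
    if hb : b.1 = [] then r
    else
      (if hcc : (T (wu (xat t b.1)) (wh (xat t b.1)
            (List.mem_of_getElem? (hxat t b hb).1))).color = c then
        gu (wu (xat t b.1)) (wh (xat t b.1) (List.mem_of_getElem? (hxat t b hb).1))
          ⟨cidx (T (wu (xat t b.1)) (wh (xat t b.1)
              (List.mem_of_getElem? (hxat t b hb).1))) (xat t b.1) :: b.1.tail,
            CTree.cons_world _
              (hwchild (xat t b.1) (List.mem_of_getElem? (hxat t b hb).1) hcc) _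
              (hxat t b hb).2⟩
      else
        gu (wu (xat t b.1)) (wh (xat t b.1) (List.mem_of_getElem? (hxat t b hb).1))
          ⟨b.1.tail, by
            rw [← hwT (xat t b.1) (List.mem_of_getElem? (hxat t b hb).1) hcc]
            exact (hxat t b hb).2⟩) with hgdef
  have hVcongr : ∀ (s s' : CTree n) (hss : s = s') (a : s.toModel.W)
      (a' : s'.toModel.W), a.1 = a'.1 → ∀ p, s.toModel.V a p = s'.toModel.V a' p := by
    rintro s _ rfl a a' h p
    rw [Subtype.ext h]
  have hgnil : ∀ (b : t.toModel.W), b.1 = [] → g b = r := by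
    intro b hb
    simp only [hgdef]
    rw [dif_pos hb]
  -- the characterization of g on non-root points
  have hgspec : ∀ (b : t.toModel.W) (hb : b.1 ≠ []) (hxX : xat t b.1 ∈ X),
      ∃ A : (T (wu (xat t b.1)) (wh (xat t b.1) hxX)).toModel.W,
        g b = gu (wu (xat t b.1)) (wh (xat t b.1) hxX) A ∧
        A.1 = pre (xat t b.1) ++ b.1.tail ∧
        (∀ p, (T (wu (xat t b.1)) (wh (xat t b.1) hxX)).toModel.V A p
            = (xat t b.1).toModel.V ⟨b.1.tail, (hxat t b hb).2⟩ p) := by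
    intro b hb hxX
    simp only [hgdef]
    rw [dif_neg hb]
    by_cases hcc : (T (wu (xat t b.1)) (wh (xat t b.1)
        (List.mem_of_getElem? (hxat t b hb).1))).color = c
    · rw [dif_pos hcc]
      refine ⟨_, rfl, ?_, ?_⟩
      · show cidx (T (wu (xat t b.1)) (wh (xat t b.1)
            (List.mem_of_getElem? (hxat t b hb).1))) (xat t b.1) :: b.1.tail
          = pre (xat t b.1) ++ b.1.tail
        simp only [hpredef]
        rw [dif_pos hxX, if_pos hcc]
        rfl
      · intro p
        exact CTree.V_cons _ _ rfl (hwchild (xat t b.1) hxX hcc) (hxat t b hb).2 p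
    · rw [dif_neg hcc]
      refine ⟨_, rfl, ?_, ?_⟩
      · show b.1.tail = pre (xat t b.1) ++ b.1.tail
        simp only [hpredef]
        rw [dif_pos hxX, if_neg hcc]
        rfl
      · intro p
        exact hVcongr _ _ (hwT (xat t b.1) hxX hcc).symm _ _ rfl p
  have hgIn : ∀ (b : t.toModel.W) (hb : b.1 ≠ []), M.R (wu (xat t b.1)) (g b) := by
    intro b hb
    obtain ⟨A, hA1, _, _⟩ := hgspec b hb (List.mem_of_getElem? (hxat t b hb).1)
    rw [hA1]
    exact hguIn _ _ A
  have hgV : ∀ (b : t.toModel.W) p, M.V (g b) p = t.toModel.V b p := by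
    intro b p
    by_cases hb : b.1 = []
    · rw [hgnil b hb, CTree.eq_root t b hb, CTree.V_root, htcol]
      split
      · rfl
      · exact hbound r p (Nat.le_of_not_lt (by assumption))
    · obtain ⟨A, hA1, _, hA3⟩ := hgspec b hb (List.mem_of_getElem? (hxat t b hb).1)
      rw [hA1, hguV, hA3]
      exact (CTree.V_cons t b (CTree.cons_head_tail hb) (hxat t b hb).1
        (hxat t b hb).2 p).symm
  have hguRcongr : ∀ (x x' : CTree n) (hxx : x' = x) (hx : x ∈ X) (hx' : x' ∈ X)
      (A : (T (wu x) (wh x hx)).toModel.W) (A' : (T (wu x') (wh x' hx')).toModel.W),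
      M.R (gu (wu x) (wh x hx) A) (gu (wu x') (wh x' hx') A') ↔ A.1 <+: A'.1 := by
    rintro x x' rfl hx hx' A A'
    exact (hguR _ _ A A').symm
  have hguRcongr2 : ∀ (u u' : M.W) (huu : u = u') (h : ImmSucc M r u)
      (h' : ImmSucc M r u') (A : (T u h).toModel.W) (A' : (T u' h').toModel.W),
      M.R (gu u h A) (gu u' h' A') ↔ A.1 <+: A'.1 := by
    rintro u _ rfl h h' A A'
    exact (hguR u h A A').symm
  have hgIff : ∀ b b', t.toModel.R b b' ↔ M.R (g b) (g b') := by
    intro b b'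
    by_cases hb : b.1 = [] <;> by_cases hb' : b'.1 = []
    · rw [hgnil b hb, hgnil b' hb', CTree.eq_root t b hb]
      exact iff_of_true (CTree.root_R t b') (hrefl r)
    · rw [hgnil b hb, CTree.eq_root t b hb]
      exact iff_of_true (CTree.root_R t b') (hroot _)
    · rw [hgnil b' hb', CTree.eq_root t b' hb']
      refine iff_of_false (CTree.not_R_root t b hb) ?_
      intro hR
      have hgr : g b = r := hanti _ _ hR (hroot _)
      have h1 : M.R (wu (xat t b.1)) r := hgr ▸ hgIn b hb
      exact (wh (xat t b.1) (List.mem_of_getElem? (hxat t b hb).1)).2.1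
        (hanti _ _ h1 (hroot _)).symm
    · have hxX : xat t b.1 ∈ X := List.mem_of_getElem? (hxat t b hb).1
      have hxX' : xat t b'.1 ∈ X := List.mem_of_getElem? (hxat t b' hb').1
      obtain ⟨A, hA1, hA2, _⟩ := hgspec b hb hxX
      obtain ⟨A', hA'1, hA'2, _⟩ := hgspec b' hb' hxX'
      by_cases hxx : xat t b'.1 = xat t b.1
      · -- same child of t
        have hhead : b'.1.headI = b.1.headI := by
          refine nodup_getElem?_inj hXnd ?_ (hxat t b hb).1
          rw [← hxx]
          exact (hxat t b' hb').1
        have hL : t.toModel.R b b' ↔ b.1.tail <+: b'.1.tail := by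
          rw [CTree.R_cons_iff t b b' (CTree.cons_head_tail hb) (CTree.cons_head_tail hb')]
          simp [hhead]
        have hpre : pre (xat t b'.1) = pre (xat t b.1) := by rw [hxx]
        rw [hL, hA1, hA'1, hguRcongr _ _ hxx hxX hxX' A A', hA2, hA'2, hpre]
        exact (List.prefix_append_right_inj _).symm
      · -- different children of t
        have hhead : b'.1.headI ≠ b.1.headI := by
          intro he
          apply hxx
          have h1 := (hxat t b hb).1
          have h2 := (hxat t b' hb').1
          rw [he] at h2
          exact Option.some_inj.mp (h2.symm.trans h1)
        refine iff_of_false ?_ ?_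
        · intro hR
          have h' : b.1.headI :: b.1.tail <+: b'.1.headI :: b'.1.tail := by
            rw [← CTree.cons_head_tail hb, ← CTree.cons_head_tail hb']
            exact hR
          exact hhead (List.cons_prefix_cons.mp h').1.symm
        · intro hR
          by_cases huu : wu (xat t b.1) = wu (xat t b'.1)
          · -- the two children sit over the same immediate successor
            have hTcongr : ∀ (u u' : M.W) (huu : u = u') (h : ImmSucc M r u)
                (h' : ImmSucc M r u'), T u h = T u' h' := by
              rintro u _ rfl h h'
              rfl
            have hPcongr : ∀ (u u' : M.W) (huu : u = u') (h : ImmSucc M r u)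
                (h' : ImmSucc M r u') (y : CTree n), y ∈ P u h → y ∈ P u' h' := by
              rintro u _ rfl h h' y hy
              exact hy
            have hTeq : T (wu (xat t b'.1)) (wh (xat t b'.1) hxX')
                = T (wu (xat t b.1)) (wh (xat t b.1) hxX) :=
              hTcongr _ _ huu.symm _ _
            have hx'P : xat t b'.1 ∈ P (wu (xat t b.1)) (wh (xat t b.1) hxX) :=
              hPcongr _ _ huu.symm _ _ _ (wP _ hxX')
            rcases hPmem _ _ _ (wP _ hxX) with ⟨hcc, _, _⟩ | ⟨hcc, hxT⟩ <;>
              rcases hPmem _ _ _ hx'P with ⟨hcc', _, _⟩ | ⟨hcc', hx'T⟩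
            · -- both are proper children: compare the head indices
              have hAR : A.1 <+: A'.1 := by
                rw [hA1, hA'1] at hR
                exact (hguRcongr2 _ _ huu _ _ A A').mp hR
              have hcolor' : (T (wu (xat t b'.1)) (wh (xat t b'.1) hxX')).color = c := by
                rw [hTeq]
                exact hcc'
              have hprex : pre (xat t b.1)
                  = [cidx (T (wu (xat t b.1)) (wh (xat t b.1) hxX)) (xat t b.1)] := by
                simp only [hpredef]
                rw [dif_pos hxX, if_pos hcc]
              have hprex' : pre (xat t b'.1)
                  = [cidx (T (wu (xat t b.1)) (wh (xat t b.1) hxX)) (xat t b'.1)] := by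
                simp only [hpredef]
                rw [dif_pos hxX', if_pos hcolor', hTeq]
              rw [hA2, hA'2, hprex, hprex'] at hAR
              have hheads := (List.cons_prefix_cons.mp hAR).1
              have hw1 := hwchild _ hxX hcc
              have hw2 := hwchild _ hxX' hcolor'
              rw [hTeq] at hw2
              rw [← hheads] at hw2
              exact hxx (Option.some_inj.mp (hw2.symm.trans hw1))
            · exact hcc' hcc
            · exact hcc hcc'
            · exact hxx (hx'T.trans hxT.symm)
          · -- distinct immediate successors
            have h1 : M.R (wu (xat t b.1)) (g b') :=
              htrans _ _ _ (hgIn b hb) hR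
            have h2 : M.R (wu (xat t b'.1)) (g b') := hgIn b' hb'
            exact huu (immSucc_unique hMod htree (wh _ hxX) (wh _ hxX') h1 h2)
  have hgInj : Function.Injective g := by
    intro b b' he
    have h1 : t.toModel.R b b' := (hgIff b b').mpr (he ▸ hrefl (g b))
    have h2 : t.toModel.R b' b := (hgIff b' b).mpr (he ▸ hrefl (g b))
    exact Subtype.ext (prefix_antisymm h1 h2)
  have hgroot : g t.root = r := hgnil t.root rfl
  exact ⟨t, hUMt, ⟨f, ⟨hfR, hfV⟩, hfS⟩, ⟨g, hgInj, hgIff, hgV, hgroot⟩⟩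
/-- the reduction exists for every finite tree-like model, by strong induction on size -/
lemma reduces_exists : ∀ (k n : ℕ) (M : KStruct) (inst : Fintype M.W),
    Fintype.card M.W ≤ k → M.IsNModel n → ∀ r : M.W, IsTree M r →
    ∃ t : CTree n, Reduces n M r t := by
  intro k
  induction k with
  | zero =>
    intro n M inst hcard hM r htree
    have hpos : 0 < Fintype.card M.W := @Fintype.card_pos _ inst ⟨r⟩
    omega
  | succ k ih =>
    intro n M inst hcard hM r htree
    by_cases hmono : ∀ w p, M.V w p = M.V r p
    · exact mono_case n M hM r hmono
    · classical
      have hIH : ∀ u, ImmSucc M r u → ∃ t : CTree n,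
          Reduces n (M.restrict {v | M.R u v}) ⟨u, hM.1.1 u⟩ t := by
        intro u h
        letI instu : Fintype (M.restrict {v | M.R u v}).W :=
          (Set.toFinite {v | M.R u v}).fintype
        refine ih n (M.restrict {v | M.R u v}) instu ?_ ?_ _ ?_
        · have h0 : ¬ M.R u r := fun hur => h.2.1 (hM.1.2.2.1 u r hur (htree.1 u)).symm
          have h1 := Fintype.card_subtype_lt (p := fun v => M.R u v) (x := r) h0
          have h2 : Fintype.card (M.restrict {v | M.R u v}).W
              = Fintype.card {x // (fun v => M.R u v) x} := Fintype.card_congr (Equiv.refl _)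
          have h3 : Fintype.card {x // (fun v => M.R u v) x} = Fintype.card {x // M.R u x} :=
            Fintype.card_congr (Equiv.refl _)
          omega
        · obtain ⟨⟨h1, h2, h3, h4⟩, h5⟩ := hM
          exact ⟨⟨fun w => h1 w.1, fun w v x hw hv => h2 w.1 v.1 x.1 hw hv,
            fun w v hw hv => Subtype.ext (h3 w.1 v.1 hw hv),
            fun w v p hw hv => h4 w.1 v.1 p hw hv⟩,
            fun w p hp => h5 w.1 p hp⟩
        · refine ⟨fun w => w.2, fun w => Set.toFinite _, ?_⟩
          intro w a b hw hv
          exact htree.2.2 w.1 a.1 b.1 hw hv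
      choose T hT using hIH
      have hUM : ∀ u h, UMem (T u h) := fun u h => (hT u h).1
      have hfex : ∀ u (h : ImmSucc M r u), ∃ f : {v // M.R u v} → (T u h).toModel.W,
          (∀ a b, M.R a.1 b.1 → (T u h).toModel.R (f a) (f b)) ∧
          (∀ a p, (T u h).toModel.V (f a) p = M.V a.1 p) ∧
          Function.Surjective f := by
        intro u h
        obtain ⟨f, ⟨h1, h2⟩, h3⟩ := (hT u h).2.1
        exact ⟨f, fun a b hab => h1 a b hab, fun a p => h2 a p, h3⟩
      choose fu hfuR hfuV hfuS using hfex
      have hgex : ∀ u (h : ImmSucc M r u), ∃ g : (T u h).toModel.W → M.W,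
          (∀ a b, (T u h).toModel.R a b ↔ M.R (g a) (g b)) ∧
          (∀ a p, M.V (g a) p = (T u h).toModel.V a p) ∧
          (g (CTree.root _) = u) ∧ (∀ a, M.R u (g a)) := by
        intro u h
        obtain ⟨g, _, h2, h3, h4⟩ := (hT u h).2.2
        exact ⟨fun a => (g a).1, fun a b => h2 a b, fun a p => h3 a p,
          congrArg Subtype.val h4, fun a => (g a).2⟩
      choose gu hguR hguV hguRoot hguIn using hgex
      exact step_case n M hM r htree hmono T hUM fu hfuR hfuV hfuS
        gu hguR hguV hguRoot hguIn

/-- every finite tree-like n-model `M` maps monotonically onto some node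
`T_w` of `𝒯(n)`, and `T_w` is isomorphic to a submodel of `M` with the same root. -/
theorem tree_reduces_to_univ_node (n : ℕ) (M : KStruct) [Fintype M.W]
    (hM : M.IsNModel n) (r : M.W) (htree : IsTree M r) :
    ∃ t : CTree n, UMem t ∧
      (∃ f : M.W → t.toModel.W, Monotonic M t.toModel f ∧ Function.Surjective f) ∧
      (∃ g : t.toModel.W → M.W, Function.Injective g ∧
        (∀ a b, t.toModel.R a b ↔ M.R (g a) (g b)) ∧
        (∀ a p, M.V (g a) p = t.toModel.V a p) ∧
        g t.root = r) :=
  reduces_exists (Fintype.card M.W) n M inferInstance le_rfl hM r htree
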